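/- A bipartite channel N is PPT if and only if it is completely PPT-preserving: (J^N)^{T_B} ≥ 0 if and only if for every reference system R and every state ρ on R A₀ B₀ with ρ^{T_{B₀ B_R}} ≥ 0 (PPT across the Alice/Bob cut, where R is split between them), the output (id_R ⊗ N)(ρ) is PPT across the same cut. -/

import Mathlib

open Matrix
open scoped ComplexOrder Kronecker
/-- Partial transpose on the second tensor factor. -/
def ptB {α β : Type*} (ρ : Matrix (α × β) (α × β) ℂ) : Matrix (α × β) (α × β) ℂ :=
  Matrix.of fun p q => ρ (p.1, q.2) (q.1, p.2)

/-- The Choi matrix J^N = Σ_{ij} E_{ij} ⊗ N(E_{ij}) of a linear map between matrix spaces. -/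
def choi {ι κ : Type*} [Fintype ι] [DecidableEq ι]
    (N : Matrix ι ι ℂ →ₗ[ℂ] Matrix κ κ ℂ) : Matrix (ι × κ) (ι × κ) ℂ :=
  Matrix.of fun p q => N (Matrix.single p.1 q.1 1) p.2 q.2

/-- Partial transpose of the Choi matrix of a bipartite channel over Bob's input (B₀)
and output (B₁) indices. -/
def ptPair {a0 b0 a1 b1 : Type*}
    (J : Matrix ((a0 × b0) × (a1 × b1)) ((a0 × b0) × (a1 × b1)) ℂ) :
    Matrix ((a0 × b0) × (a1 × b1)) ((a0 × b0) × (a1 × b1)) ℂ :=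
  Matrix.of fun p q =>
    J ((p.1.1, q.1.2), (p.2.1, q.2.2)) ((q.1.1, p.1.2), (q.2.1, p.2.2))

/-- Complete positivity: id_k ⊗ N maps positive semidefinite matrices to positive
semidefinite matrices for every k. -/
def IsCompletelyPositive {ι κ : Type*} [Fintype ι] [DecidableEq ι] [Fintype κ]
    (N : Matrix ι ι ℂ →ₗ[ℂ] Matrix κ κ ℂ) : Prop :=
  ∀ (k : ℕ) (ρ : Matrix (Fin k × ι) (Fin k × ι) ℂ), ρ.PosSemidef →
    (Matrix.of (fun (p q : Fin k × κ) => N (Matrix.of fun i j => ρ (p.1, i) (q.1, j)) p.2 q.2)).PosSemidef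

/-- The conjugation T_{B₁} ∘ Λ ∘ T_{B₀} of a map between bipartite systems by the
partial transpose on Bob's input and output. -/
def pptConj {α β α' β' : Type*} [Fintype α] [Fintype β] [DecidableEq α] [DecidableEq β]
    (Λ : Matrix (α × β) (α × β) ℂ →ₗ[ℂ] Matrix (α' × β') (α' × β') ℂ) :
    Matrix (α × β) (α × β) ℂ →ₗ[ℂ] Matrix (α' × β') (α' × β') ℂ where
  toFun X := ptB (Λ (ptB X))
  map_add' X Y := by
    show ptB (Λ (ptB (X + Y))) = _
    rw [show ptB (X + Y) = ptB X + ptB Y from rfl, map_add]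
    rfl
  map_smul' c X := by
    show ptB (Λ (ptB (c • X))) = _
    rw [show ptB (c • X) = c • ptB X from rfl, LinearMap.map_smul]
    rfl

/-- The extension id_{R_A} ⊗ id_{R_B} ⊗ N of a bipartite map N to reference systems
R_A (held by Alice) and R_B (held by Bob). -/
def extChan {a0 b0 a1 b1 : Type*} [Fintype a0] [Fintype b0] [DecidableEq a0] [DecidableEq b0]
    (rA rB : ℕ)
    (N : Matrix (a0 × b0) (a0 × b0) ℂ →ₗ[ℂ] Matrix (a1 × b1) (a1 × b1) ℂ)
    (ρ : Matrix ((Fin rA × a0) × (Fin rB × b0)) ((Fin rA × a0) × (Fin rB × b0)) ℂ) :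
    Matrix ((Fin rA × a1) × (Fin rB × b1)) ((Fin rA × a1) × (Fin rB × b1)) ℂ :=
  Matrix.of fun p q =>
    N (Matrix.of fun u v => ρ ((p.1.1, u.1), (p.2.1, u.2)) ((q.1.1, v.1), (q.2.1, v.2)))
      (p.1.2, p.2.2) (q.1.2, q.2.2)

section AuxLemmas

lemma reorg' {ι₁ ι₂ ι₃ ι₄ : Type*} [Fintype ι₁] [Fintype ι₂] [Fintype ι₃] [Fintype ι₄]
    (A : ι₁ → ι₃ → ℂ) (Bf : ι₂ → ι₃ → ℂ) (C : ι₁ → ι₄ → ℂ) (D : ι₂ → ι₄ → ℂ) :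
    ∑ w, ∑ k, (∑ u, A w u * Bf k u) * (∑ v, C w v * D k v)
      = ∑ u, ∑ v, (∑ w, A w u * C w v) * (∑ k, Bf k u * D k v) := by
  have h1 : ∑ w, ∑ k, (∑ u, A w u * Bf k u) * (∑ v, C w v * D k v)
      = ∑ p : ι₁ × ι₂, ∑ q : ι₃ × ι₄,
          (A p.1 q.1 * C p.1 q.2) * (Bf p.2 q.1 * D p.2 q.2) := by
    rw [Fintype.sum_prod_type]
    refine Finset.sum_congr rfl fun w _ => ?_
    refine Finset.sum_congr rfl fun k _ => ?_
    rw [Fintype.sum_prod_type, Finset.sum_mul_sum]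
    exact Finset.sum_congr rfl fun u _ => Finset.sum_congr rfl fun v _ => by ring
  have h2 : ∑ u, ∑ v, (∑ w, A w u * C w v) * (∑ k, Bf k u * D k v)
      = ∑ q : ι₃ × ι₄, ∑ p : ι₁ × ι₂,
          (A p.1 q.1 * C p.1 q.2) * (Bf p.2 q.1 * D p.2 q.2) := by
    rw [Fintype.sum_prod_type]
    refine Finset.sum_congr rfl fun u _ => ?_
    refine Finset.sum_congr rfl fun v _ => ?_
    rw [Fintype.sum_prod_type, Finset.sum_mul_sum]
  rw [h1, h2, Finset.sum_comm]

lemma psd_empty {n : Type*} [Fintype n] [IsEmpty n] (M : Matrix n n ℂ) : M.PosSemidef := by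
  refine posSemidef_iff_dotProduct_mulVec.mpr ⟨?_, fun x => ?_⟩
  · ext i j; exact isEmptyElim i
  · simp [dotProduct]

lemma psd_smul_real {n : Type*} [Fintype n] {M : Matrix n n ℂ} (hM : M.PosSemidef)
    {c : ℝ} (hc : 0 ≤ c) : ((c : ℂ) • M).PosSemidef := by
  refine posSemidef_iff_dotProduct_mulVec.mpr ⟨?_, fun x => ?_⟩
  · have := hM.1
    unfold Matrix.IsHermitian at this ⊢
    rw [Matrix.conjTranspose_smul, this]
    congr 1
    simp
  · rw [Matrix.smul_mulVec, dotProduct_smul, smul_eq_mul]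
    exact mul_nonneg (Complex.zero_le_real.mpr hc) ((posSemidef_iff_dotProduct_mulVec.mp hM).2 x)

lemma psd_vecMulVec {n : Type*} [Fintype n] (v : n → ℂ) :
    (Matrix.vecMulVec v (star v)).PosSemidef := by
  refine posSemidef_iff_dotProduct_mulVec.mpr ⟨?_, fun x => ?_⟩
  · ext i j
    simp [Matrix.conjTranspose_apply, Matrix.vecMulVec_apply, mul_comm]
  · have hv : ∀ i, (Matrix.vecMulVec v (star v) *ᵥ x) i = v i * (star v ⬝ᵥ x) := by
      intro i
      simp [Matrix.mulVec, Matrix.vecMulVec_apply, dotProduct, Finset.mul_sum, mul_assoc]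
    have : star x ⬝ᵥ (Matrix.vecMulVec v (star v) *ᵥ x)
        = star (star v ⬝ᵥ x) * (star v ⬝ᵥ x) := by
      simp only [dotProduct, hv, Pi.star_apply, ← mul_assoc]
      rw [← Finset.sum_mul, star_sum]
      congr 1
      refine Finset.sum_congr rfl fun i _ => ?_
      simp only [star_mul', star_star, Pi.star_apply]
      ring
    rw [this]
    exact star_mul_self_nonneg _

variable {a0 b0 a1 b1 : Type*} [Fintype a0] [Fintype b0] [Fintype a1] [Fintype b1]
  [DecidableEq a0] [DecidableEq b0]
  (Λ : Matrix (a0 × b0) (a0 × b0) ℂ →ₗ[ℂ] Matrix (a1 × b1) (a1 × b1) ℂ)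

lemma ptB_extChan (rA rB : ℕ)
    (ρ : Matrix ((Fin rA × a0) × (Fin rB × b0)) ((Fin rA × a0) × (Fin rB × b0)) ℂ) :
    ptB (extChan rA rB Λ ρ) = extChan rA rB (pptConj Λ) (ptB ρ) := by
  ext p q
  rfl

lemma choi_pptConj : choi (pptConj Λ) = ptPair (choi Λ) := by
  ext p q
  show ptB (Λ (ptB (Matrix.single p.1 q.1 1))) p.2 q.2 = _
  have h : ptB (Matrix.single p.1 q.1 (1:ℂ)) =
      Matrix.single (p.1.1, q.1.2) (q.1.1, p.1.2) 1 := by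
    ext u v
    simp [ptB, Matrix.single, Prod.ext_iff]
    exact if_congr (by tauto) rfl rfl
  rw [h]
  rfl

lemma apply_entry (X : Matrix (a0 × b0) (a0 × b0) ℂ) (p q : a1 × b1) :
    Λ X p q = ∑ u, ∑ v, X u v * choi Λ (u, p) (v, q) := by
  conv_lhs => rw [matrix_eq_sum_single X]
  rw [map_sum]
  simp only [Matrix.sum_apply]
  refine Finset.sum_congr rfl fun u _ => ?_
  rw [map_sum]
  simp only [Matrix.sum_apply]
  refine Finset.sum_congr rfl fun v _ => ?_
  rw [show Matrix.single u v (X u v) = X u v • Matrix.single u v (1:ℂ) by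
    rw [Matrix.smul_single, smul_eq_mul, mul_one], LinearMap.map_smul]
  simp [choi, smul_eq_mul]

lemma keyCP (hJ : (choi Λ).PosSemidef) (rA rB : ℕ)
    (σ : Matrix ((Fin rA × a0) × (Fin rB × b0)) ((Fin rA × a0) × (Fin rB × b0)) ℂ)
    (hσ : σ.PosSemidef) : (extChan rA rB Λ σ).PosSemidef := by
  obtain ⟨B, hB⟩ := (by classical open scoped MatrixOrder in
    exact CStarAlgebra.nonneg_iff_eq_star_mul_self.mp hJ.nonneg : ∃ B, choi Λ = star B * B)
  obtain ⟨C, hC⟩ := (by open scoped MatrixOrder in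
    exact CStarAlgebra.nonneg_iff_eq_star_mul_self.mp hσ.nonneg : ∃ C, σ = star C * C)
  set D : Matrix ((((Fin rA × a0) × (Fin rB × b0)) × ((a0 × b0) × (a1 × b1))))
      ((Fin rA × a1) × (Fin rB × b1)) ℂ :=
    Matrix.of fun t p => ∑ u, C t.1 ((p.1.1, u.1), (p.2.1, u.2)) * B t.2 (u, (p.1.2, p.2.2))
    with hD
  have hmain : extChan rA rB Λ σ = Dᴴ * D := by
    ext p q
    rw [Matrix.mul_apply]
    show Λ (Matrix.of fun u v => σ ((p.1.1, u.1), (p.2.1, u.2)) ((q.1.1, v.1), (q.2.1, v.2)))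
        (p.1.2, p.2.2) (q.1.2, q.2.2) = _
    rw [apply_entry]
    have hσe : ∀ P Q, σ P Q = ∑ w, (starRingEnd ℂ) (C w P) * C w Q := by
      intro P Q; rw [hC, Matrix.mul_apply]; rfl
    have hJe : ∀ P Q, choi Λ P Q = ∑ k, (starRingEnd ℂ) (B k P) * B k Q := by
      intro P Q; rw [hB, Matrix.mul_apply]; rfl
    calc ∑ u, ∑ v,
          (Matrix.of fun u v => σ ((p.1.1, u.1), (p.2.1, u.2)) ((q.1.1, v.1), (q.2.1, v.2))) u v
            * choi Λ (u, (p.1.2, p.2.2)) (v, (q.1.2, q.2.2))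
        = ∑ u, ∑ v, (∑ w, (starRingEnd ℂ) (C w ((p.1.1, u.1), (p.2.1, u.2)))
              * C w ((q.1.1, v.1), (q.2.1, v.2)))
            * (∑ k, (starRingEnd ℂ) (B k (u, (p.1.2, p.2.2))) * B k (v, (q.1.2, q.2.2))) := by
          simp only [Matrix.of_apply, hσe, hJe]
      _ = ∑ w, ∑ k, (∑ u, (starRingEnd ℂ) (C w ((p.1.1, u.1), (p.2.1, u.2)))
              * (starRingEnd ℂ) (B k (u, (p.1.2, p.2.2))))
            * (∑ v, C w ((q.1.1, v.1), (q.2.1, v.2)) * B k (v, (q.1.2, q.2.2))) :=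
          (reorg' _ _ _ _).symm
      _ = ∑ t : (((Fin rA × a0) × (Fin rB × b0)) × ((a0 × b0) × (a1 × b1))),
            Dᴴ p t * D t q := by
          conv_rhs => rw [Fintype.sum_prod_type]
          refine Finset.sum_congr rfl fun w _ => Finset.sum_congr rfl fun k _ => ?_
          simp only [hD, Matrix.conjTranspose_apply, Matrix.of_apply, star_sum, star_mul',
            Complex.star_def]
  rw [hmain]
  exact Matrix.posSemidef_conjTranspose_mul_self D

end AuxLemmas
/-- A bipartite channel is PPT iff it is completely PPT-preserving: its Choi matrix has
positive partial transpose over Bob's systems iff, for all reference systems split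
between Alice and Bob, it sends states that are PPT across the Alice/Bob cut to states
that are PPT across the same cut. -/
theorem stmt_13 (a0 b0 a1 b1 : ℕ)
    (N : Matrix (Fin a0 × Fin b0) (Fin a0 × Fin b0) ℂ →ₗ[ℂ]
         Matrix (Fin a1 × Fin b1) (Fin a1 × Fin b1) ℂ)
    (hcp : IsCompletelyPositive N) (htp : ∀ ρ, (N ρ).trace = ρ.trace) :
    (ptPair (choi N)).PosSemidef ↔
      ∀ (rA rB : ℕ)
        (ρ : Matrix ((Fin rA × Fin a0) × (Fin rB × Fin b0))
                    ((Fin rA × Fin a0) × (Fin rB × Fin b0)) ℂ),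
        ρ.PosSemidef → ρ.trace = 1 → (ptB ρ).PosSemidef →
        (ptB (extChan rA rB N ρ)).PosSemidef := by
  constructor
  · intro hJ rA rB ρ _ _ hppt
    rw [ptB_extChan]
    exact keyCP (pptConj N) (by rw [choi_pptConj]; exact hJ) rA rB (ptB ρ) hppt
  · intro h
    rcases Nat.eq_zero_or_pos a0 with h0 | ha0
    · subst h0; exact psd_empty _
    rcases Nat.eq_zero_or_pos b0 with h0 | hb0
    · subst h0; exact psd_empty _
    rcases Nat.eq_zero_or_pos a1 with h0 | ha1
    · subst h0; exact psd_empty _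
    rcases Nat.eq_zero_or_pos b1 with h0 | hb1
    · subst h0; exact psd_empty _
    set c : ℝ := (((a0 * b0 : ℕ)) : ℝ)⁻¹ with hc
    have hc0 : 0 ≤ c := by positivity
    set v : (Fin a0 × Fin a0) × (Fin b0 × Fin b0) → ℂ :=
      fun P => (if P.1.1 = P.1.2 then 1 else 0) * (if P.2.1 = P.2.2 then 1 else 0) with hv
    set ρ : Matrix ((Fin a0 × Fin a0) × (Fin b0 × Fin b0))
        ((Fin a0 × Fin a0) × (Fin b0 × Fin b0)) ℂ :=
      (c : ℂ) • Matrix.vecMulVec v (star v) with hρdef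
    have hρ : ρ.PosSemidef := psd_smul_real (psd_vecMulVec v) hc0
    have hpt : ptB ρ = ρ := by
      ext P Q
      simp only [hρdef, ptB, Matrix.smul_apply, Matrix.of_apply, Matrix.vecMulVec_apply, hv,
        Pi.star_apply, Complex.star_def, star_mul', apply_ite (starRingEnd ℂ), _root_.map_one, _root_.map_zero,
        smul_eq_mul]
      ring
    have htr : ρ.trace = 1 := by
      have : (Matrix.vecMulVec v (star v)).trace = ((a0 * b0 : ℕ) : ℂ) := by
        simp only [Matrix.trace, Matrix.diag_apply, Matrix.vecMulVec_apply, hv, Pi.star_apply,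
          Complex.star_def, star_mul', apply_ite (starRingEnd ℂ), _root_.map_one, _root_.map_zero,
          Fintype.sum_prod_type]
        simp [Finset.sum_ite_eq, ite_mul, mul_ite]
      rw [hρdef, Matrix.trace_smul, this, smul_eq_mul, hc]
      have hne : ((a0 * b0 : ℕ) : ℂ) ≠ 0 := by
        simp only [ne_eq, Nat.cast_eq_zero, Nat.mul_eq_zero, not_or]
        omega
      push_cast
      push_cast at hne
      field_simp
    have key := h a0 b0 ρ hρ htr (hpt ▸ hρ)
    set φ : ((Fin a0 × Fin b0) × (Fin a1 × Fin b1)) → ((Fin a0 × Fin a1) × (Fin b0 × Fin b1)) :=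
      fun P => ((P.1.1, P.2.1), (P.1.2, P.2.2)) with hφ
    have heq : ptPair (choi N)
        = ((c⁻¹ : ℝ) : ℂ) • ((ptB (extChan a0 b0 N ρ)).submatrix φ φ) := by
      ext P Q
      have hcR : c ≠ 0 := by
        rw [hc]
        exact inv_ne_zero (Nat.cast_ne_zero.mpr (Nat.mul_ne_zero ha0.ne' hb0.ne'))
      have hM : (Matrix.of fun u w =>
            ρ ((P.1.1, u.1), (Q.1.2, u.2)) ((Q.1.1, w.1), (P.1.2, w.2)))
          = (c : ℂ) • Matrix.single (P.1.1, Q.1.2) (Q.1.1, P.1.2) 1 := by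
        ext u w
        obtain ⟨u1, u2⟩ := u
        obtain ⟨w1, w2⟩ := w
        simp only [hρdef, Matrix.of_apply, Matrix.smul_apply, Matrix.vecMulVec_apply, hv,
          Pi.star_apply, Complex.star_def, star_mul', apply_ite (starRingEnd ℂ),
          _root_.map_one, _root_.map_zero, Matrix.single, smul_eq_mul, Prod.mk.injEq,
          ite_and]
        split_ifs <;> ring
      have h1 : (ptB (extChan a0 b0 N ρ)) (φ P) (φ Q)
          = N ((c : ℂ) • Matrix.single (P.1.1, Q.1.2) (Q.1.1, P.1.2) 1)
              (P.2.1, Q.2.2) (Q.2.1, P.2.2) := by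
        show N (Matrix.of fun u w => ρ ((P.1.1, u.1), (Q.1.2, u.2)) ((Q.1.1, w.1), (P.1.2, w.2)))
            (P.2.1, Q.2.2) (Q.2.1, P.2.2) = _
        rw [hM]
      have h2 : N ((c : ℂ) • Matrix.single (P.1.1, Q.1.2) (Q.1.1, P.1.2) 1)
            (P.2.1, Q.2.2) (Q.2.1, P.2.2)
          = (c : ℂ) * choi N ((P.1.1, Q.1.2), (P.2.1, Q.2.2)) ((Q.1.1, P.1.2), (Q.2.1, P.2.2)) := by
        rw [LinearMap.map_smul]
        rfl
      show ptPair (choi N) P Q = ((c⁻¹ : ℝ) : ℂ) * (ptB (extChan a0 b0 N ρ)) (φ P) (φ Q)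
      rw [h1, h2]
      show choi N ((P.1.1, Q.1.2), (P.2.1, Q.2.2)) ((Q.1.1, P.1.2), (Q.2.1, P.2.2)) = _
      rw [← mul_assoc, ← Complex.ofReal_mul, inv_mul_cancel₀ hcR, Complex.ofReal_one, one_mul]
    rw [heq]
    exact psd_smul_real (key.submatrix φ) (inv_nonneg.mpr hc0)
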